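/- arXiv:math/0702806 — 5 statements merged into one kernel-verified Lean document; each statement's English description precedes it below -/
import Mathlib

section
/- Let ψ : [0,∞) → [0,∞) be a bounded non-increasing function with ∫₀^∞ ψ(x) dx < ∞. Then there exist a constant C < ∞ and a non-decreasing C² function M : (-∞,0] → [0,1] with M ≥ 0, M'' ≥ 0 and M·M'' ≥ (M')² pointwise, such that ψ(x) ≤ C·M'(-x) for all x ≥ 0. -/
open MeasureTheory intervalIntegral

lemma naz_avg_ge {f : ℝ → ℝ} (hf : Antitone f) (x : ℝ) :
    f x ≤ ∫ t in (x-1)..x, f t := by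
  have h := integral_mono_on (by linarith : x - 1 ≤ x)
    (_root_.intervalIntegrable_const (μ := volume) (c := f x)) hf.intervalIntegrable
    (fun t ht => hf ht.2)
  simpa using h

lemma naz_avg_le {f : ℝ → ℝ} (hf : Antitone f) (x : ℝ) :
    (∫ t in (x-1)..x, f t) ≤ f (x-1) := by
  have h := integral_mono_on (by linarith : x - 1 ≤ x)
    hf.intervalIntegrable (_root_.intervalIntegrable_const (μ := volume) (c := f (x-1)))
    (fun t ht => hf ht.1)
  simpa using h

lemma naz_avg_anti {f : ℝ → ℝ} (hf : Antitone f) :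
    Antitone (fun x => ∫ t in (x-1)..x, f t) := by
  intro a b hab
  have hshift : Antitone (fun t => f (t + (b - a))) :=
    fun u v huv => hf (by linarith)
  have h1 : (∫ t in (a-1)..a, f (t + (b-a))) ≤ ∫ t in (a-1)..a, f t :=
    integral_mono_on (by linarith) hshift.intervalIntegrable hf.intervalIntegrable
      (fun t _ => hf (by linarith))
  have h2 : (∫ t in (a-1)..a, f (t + (b-a))) = ∫ t in (b-1)..b, f t := by
    rw [integral_comp_add_right]
    congr 1 <;> ring
  simpa [h2] using h1

/-- Primitive of a continuous function, as `HasDerivAt`. -/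
lemma naz_ftc {f : ℝ → ℝ} (hf : Continuous f) (a b : ℝ) :
    HasDerivAt (fun u => ∫ x in a..u, f x) (f b) b :=
  integral_hasDerivAt_right (hf.intervalIntegrable a b)
    (hf.stronglyMeasurableAtFilter _ _) hf.continuousAt

/-- Nazarov's lemma: for `ψ` bounded, non-increasing, integrable on `ℝ₊`,
there are `C < ∞` and a non-decreasing C² function `M : (-∞,0] → [0,1]` with
`[[M,M'],[M',M'']] ≥ 0` pointwise, such that `ψ(x) ≤ C·M'(-x)` for all `x ≥ 0`. -/
theorem stmt4 (ψ : ℝ → ℝ) (hψ0 : ∀ x ≥ (0:ℝ), 0 ≤ ψ x)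
    (hψbdd : ∃ C, ∀ x ≥ (0:ℝ), ψ x ≤ C)
    (hψmono : AntitoneOn ψ (Set.Ici 0))
    (hψint : IntegrableOn ψ (Set.Ici 0)) :
    ∃ (C : ℝ) (M : ℝ → ℝ), ContDiff ℝ 2 M ∧
      MonotoneOn M (Set.Iic 0) ∧
      (∀ x ≤ (0:ℝ), 0 ≤ M x ∧ M x ≤ 1) ∧
      (∀ x ≤ (0:ℝ), 0 ≤ deriv (deriv M) x) ∧
      (∀ x ≤ (0:ℝ), (deriv M x)^2 ≤ M x * deriv (deriv M) x) ∧
      (∀ x ≥ (0:ℝ), ψ x ≤ C * deriv M (-x)) := by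
  classical
  -- the three smoothing levels
  set p0 : ℝ → ℝ := fun x => ψ (max x 0) with hp0def
  set p1 : ℝ → ℝ := fun x => ∫ t in (x-1)..x, p0 t with hp1def
  set p2 : ℝ → ℝ := fun x => ∫ t in (x-1)..x, p1 t with hp2def
  have hp0anti : Antitone p0 := fun a b hab =>
    hψmono (Set.mem_Ici.mpr (le_max_right _ _)) (Set.mem_Ici.mpr (le_max_right _ _)) (max_le_max hab le_rfl)
  have hp0nonneg : ∀ x, 0 ≤ p0 x := fun x => hψ0 _ (le_max_right _ _)
  have hp0le : ∀ x, p0 x ≤ ψ 0 := fun x =>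
    hψmono (Set.mem_Ici.mpr le_rfl) (Set.mem_Ici.mpr (le_max_right _ _)) (le_max_right _ _)
  have hp1anti : Antitone p1 := naz_avg_anti hp0anti
  have hp1nonneg : ∀ x, 0 ≤ p1 x := fun x =>
    intervalIntegral.integral_nonneg (by linarith) (fun t _ => hp0nonneg t)
  have hp1ge : ∀ x, p0 x ≤ p1 x := naz_avg_ge hp0anti
  have hp1le : ∀ x, p1 x ≤ p0 (x-1) := naz_avg_le hp0anti
  -- continuity of p1
  have hp1cont : Continuous p1 := by
    have hmeas : ∀ a b : ℝ, IntervalIntegrable p0 volume a b :=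
      fun a b => hp0anti.intervalIntegrable
    have : p1 = fun x => (∫ t in (0:ℝ)..x, p0 t) - ∫ t in (0:ℝ)..(x-1), p0 t := by
      funext x
      rw [intervalIntegral.integral_interval_sub_left (hmeas 0 x) (hmeas 0 (x-1))]
    rw [this]
    exact (intervalIntegral.continuous_primitive hmeas 0).sub
      ((intervalIntegral.continuous_primitive hmeas 0).comp (continuous_sub_right 1))
  have hp2anti : Antitone p2 := naz_avg_anti hp1anti
  have hp2nonneg : ∀ x, 0 ≤ p2 x := fun x =>
    intervalIntegral.integral_nonneg (by linarith) (fun t _ => hp1nonneg t)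
  have hp2ge : ∀ x, p1 x ≤ p2 x := naz_avg_ge hp1anti
  have hp2le : ∀ x, p2 x ≤ p1 (x-1) := naz_avg_le hp1anti
  -- p2 is C¹ with derivative p1 x - p1 (x-1)
  have hp2deriv : ∀ x, HasDerivAt p2 (p1 x - p1 (x-1)) x := by
    intro x
    have : p2 = fun x => (∫ t in (0:ℝ)..x, p1 t) - ∫ t in (0:ℝ)..(x-1), p1 t := by
      funext x
      rw [intervalIntegral.integral_interval_sub_left (hp1cont.intervalIntegrable 0 x)
        (hp1cont.intervalIntegrable 0 (x-1))]
    rw [this]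
    have h1 : HasDerivAt (fun u => ∫ t in (0:ℝ)..u, p1 t) (p1 x) x := naz_ftc hp1cont 0 x
    have h2 : HasDerivAt (fun u => ∫ t in (0:ℝ)..(u-1), p1 t) (p1 (x-1)) x := by
      have := (naz_ftc hp1cont 0 (x-1)).comp x ((hasDerivAt_id x).sub_const 1)
      exact this.congr_deriv (by ring)
    exact h1.sub h2
  have hp2cont : Continuous p2 := by
    have : Differentiable ℝ p2 := fun x => (hp2deriv x).differentiableAt
    exact this.continuous
  -- the primitive F and the function M
  set F : ℝ → ℝ := fun x => ∫ t in (0:ℝ)..x, p2 t with hFdef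
  have hF : ∀ x, HasDerivAt F (p2 x) x := fun x => naz_ftc hp2cont 0 x
  set M : ℝ → ℝ := fun y => Real.exp (-(F (-y))) with hMdef
  have hMpos : ∀ y, 0 < M y := fun y => Real.exp_pos _
  have hM : ∀ y, HasDerivAt M (p2 (-y) * M y) y := by
    intro y
    have h1 : HasDerivAt (fun y : ℝ => -(F (-y))) (p2 (-y)) y := by
      have := ((hF (-y)).comp y (hasDerivAt_neg y)).neg
      exact this.congr_deriv (by ring)
    have := h1.exp
    simpa [hMdef, mul_comm] using this
  have hderivM : deriv M = fun y => p2 (-y) * M y := funext fun y => (hM y).deriv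
  have hM2 : ∀ y, HasDerivAt (fun y => p2 (-y) * M y)
      ((p1 (-y-1) - p1 (-y)) * M y + p2 (-y) * (p2 (-y) * M y)) y := by
    intro y
    have ha : HasDerivAt (fun y : ℝ => p2 (-y)) (p1 (-y-1) - p1 (-y)) y := by
      have := (hp2deriv (-y)).comp y (hasDerivAt_neg y)
      exact this.congr_deriv (by ring)
    exact ha.mul (hM y)
  have hderiv2M : deriv (deriv M) =
      fun y => (p1 (-y-1) - p1 (-y)) * M y + p2 (-y) * (p2 (-y) * M y) := by
    rw [hderivM]
    exact funext fun y => (hM2 y).deriv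
  -- smoothness
  have hdiffM : Differentiable ℝ M := fun y => (hM y).differentiableAt
  have hc1p2 : ContDiff ℝ 1 p2 := by
    rw [contDiff_one_iff_deriv]
    refine ⟨fun x => (hp2deriv x).differentiableAt, ?_⟩
    have : deriv p2 = fun x => p1 x - p1 (x-1) := funext fun x => (hp2deriv x).deriv
    rw [this]
    exact hp1cont.sub (hp1cont.comp (continuous_sub_right 1))
  have hc2F : ContDiff ℝ 2 F := by
    rw [show (2 : WithTop ℕ∞) = 1 + 1 from rfl, contDiff_succ_iff_deriv]
    refine ⟨fun x => (hF x).differentiableAt, by simp, ?_⟩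
    have : deriv F = p2 := funext fun x => (hF x).deriv
    rw [this]
    exact hc1p2
  have hc2M : ContDiff ℝ 2 M := by
    have hinner : ContDiff ℝ 2 (fun y : ℝ => -(F (-y))) :=
      (hc2F.comp (contDiff_id.neg)).neg
    exact hinner.exp
  -- the constant
  set I : ℝ := ∫ t in Set.Ioi (0:ℝ), ψ t with hIdef
  have hInonneg : 0 ≤ I :=
    setIntegral_nonneg measurableSet_Ioi (fun t ht => hψ0 t (le_of_lt ht))
  set L : ℝ := 2 * ψ 0 + I with hLdef
  -- F x ≤ L for x ≥ 0
  have hFle : ∀ x ≥ (0:ℝ), F x ≤ L := by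
    intro x hx
    have hshift : Antitone (fun t => p0 (t - 2)) := fun u v huv => hp0anti (by linarith)
    have h1 : F x ≤ ∫ t in (0:ℝ)..x, p0 (t-2) := by
      apply integral_mono_on hx ((hp2cont).intervalIntegrable 0 x)
        hshift.intervalIntegrable
      intro t _
      calc p2 t ≤ p1 (t-1) := hp2le t
        _ ≤ p0 (t-1-1) := hp1le (t-1)
        _ = p0 (t-2) := by congr 1; ring
    have h2 : (∫ t in (0:ℝ)..x, p0 (t-2)) = ∫ t in (-2:ℝ)..(x-2), p0 t := by
      rw [intervalIntegral.integral_comp_sub_right]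
      norm_num
    have h3 : (∫ t in (-2:ℝ)..(x-2), p0 t)
        = (∫ t in (-2:ℝ)..(0:ℝ), p0 t) + ∫ t in (0:ℝ)..(x-2), p0 t :=
      (intervalIntegral.integral_add_adjacent_intervals
        hp0anti.intervalIntegrable hp0anti.intervalIntegrable).symm
    have h4 : (∫ t in (-2:ℝ)..(0:ℝ), p0 t) ≤ 2 * ψ 0 := by
      have := integral_mono_on (by norm_num : (-2:ℝ) ≤ 0)
        hp0anti.intervalIntegrable (_root_.intervalIntegrable_const (μ := volume) (c := ψ 0))
        (fun t _ => hp0le t)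
      simpa using this
    have h5 : (∫ t in (0:ℝ)..(x-2), p0 t) ≤ I := by
      rcases le_or_gt x 2 with hx2 | hx2
      · have : (∫ t in (0:ℝ)..(x-2), p0 t) ≤ 0 := by
          rw [intervalIntegral.integral_symm]
          simp only [neg_nonpos]
          exact intervalIntegral.integral_nonneg (by linarith) (fun t _ => hp0nonneg t)
        linarith
      · rw [intervalIntegral.integral_of_le (by linarith)]
        have hcongr : (∫ t in Set.Ioc (0:ℝ) (x-2), p0 t) = ∫ t in Set.Ioc (0:ℝ) (x-2), ψ t := by
          apply setIntegral_congr_fun measurableSet_Ioc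
          intro t ht
          simp [hp0def, max_eq_left (le_of_lt ht.1)]
        rw [hcongr]
        apply setIntegral_mono_set (hψint.mono_set Set.Ioi_subset_Ici_self)
        · filter_upwards [ae_restrict_mem measurableSet_Ioi] with t ht
          exact hψ0 t (le_of_lt ht)
        · exact (Set.Ioc_subset_Ioi_self).eventuallyLE
    linarith
  have hFnonneg : ∀ x ≥ (0:ℝ), 0 ≤ F x := fun x hx =>
    intervalIntegral.integral_nonneg hx (fun t _ => hp2nonneg t)
  refine ⟨Real.exp L, M, hc2M, ?_, ?_, ?_, ?_, ?_⟩
  · exact (monotone_of_deriv_nonneg hdiffM (by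
      rw [hderivM]
      exact fun y => mul_nonneg (hp2nonneg _) (hMpos y).le)).monotoneOn _
  · intro x hx
    refine ⟨(hMpos x).le, ?_⟩
    have h0F : 0 ≤ F (-x) := hFnonneg _ (by linarith)
    calc M x = Real.exp (-F (-x)) := by rw [hMdef]
      _ ≤ 1 := Real.exp_le_one_iff.mpr (by linarith)
  · intro x _
    rw [hderiv2M]
    have h1 : 0 ≤ p1 (-x-1) - p1 (-x) := sub_nonneg.mpr (hp1anti (by linarith))
    have := hMpos x
    have := hp2nonneg (-x)
    positivity
  · intro x _
    have e1 : deriv M x = p2 (-x) * M x := (hM x).deriv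
    have e2 : deriv (deriv M) x = (p1 (-x-1) - p1 (-x)) * M x + p2 (-x) * (p2 (-x) * M x) := by
      rw [hderivM]; exact (hM2 x).deriv
    rw [e1, e2]
    have h1 : 0 ≤ p1 (-x-1) - p1 (-x) := sub_nonneg.mpr (hp1anti (by linarith))
    have h2 := (hMpos x).le
    nlinarith [mul_nonneg (mul_nonneg h1 h2) h2]
  · intro x hx
    have hMx : M (-x) = Real.exp (-(F x)) := by rw [hMdef]; simp
    have key : Real.exp L * (p2 x * Real.exp (-(F x))) = p2 x * Real.exp (L - F x) := by
      rw [mul_left_comm, ← Real.exp_add, sub_eq_add_neg]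
    have hge1 : (1:ℝ) ≤ Real.exp (L - F x) :=
      Real.one_le_exp (by linarith [hFle x hx])
    have hψle : ψ x ≤ p2 x := by
      have : ψ x = p0 x := by simp [hp0def, max_eq_left hx]
      rw [this]
      exact le_trans (hp1ge x) (hp2ge x)
    calc ψ x ≤ p2 x := hψle
      _ ≤ p2 x * Real.exp (L - F x) := le_mul_of_one_le_right (hp2nonneg x) hge1
      _ = Real.exp L * deriv M (-x) := by
          rw [(hM (-x)).deriv, neg_neg, hMx]; exact key.symm
end

section
/- Let H be a Hilbert space and Π a C² smooth operator-valued function of one complex variable whose values are orthogonal projections, satisfying Π·∂Π = 0 pointwise. Then ∂∂̄Π = (∂Π)(∂Π)* − (∂Π)*(∂Π), where ∂̄Π = (∂Π)*. -/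
open Complex

/-- Wirtinger derivative `∂ = ½(∂/∂x − i·∂/∂y)`. -/
noncomputable def wD {F : Type*} [NormedAddCommGroup F] [NormedSpace ℂ F]
    (f : ℂ → F) (z : ℂ) : F :=
  (2:ℂ)⁻¹ • (fderiv ℝ f z 1 - Complex.I • fderiv ℝ f z Complex.I)

/-- Conjugate Wirtinger derivative `∂̄ = ½(∂/∂x + i·∂/∂y)`. -/
noncomputable def wDb {F : Type*} [NormedAddCommGroup F] [NormedSpace ℂ F]
    (f : ℂ → F) (z : ℂ) : F :=
  (2:ℂ)⁻¹ • (fderiv ℝ f z 1 + Complex.I • fderiv ℝ f z Complex.I)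

section helpers

variable {F : Type*} [NormedAddCommGroup F] [NormedSpace ℂ F]

lemma wD_congr {f g : ℂ → F} {z : ℂ} (h : f =ᶠ[nhds z] g) : wD f z = wD g z := by
  unfold wD; rw [h.fderiv_eq]

lemma wDb_congr {f g : ℂ → F} {z : ℂ} (h : f =ᶠ[nhds z] g) : wDb f z = wDb g z := by
  unfold wDb; rw [h.fderiv_eq]

lemma diffAt_wD {P : ℂ → F} {z : ℂ} (h : ContDiffAt ℝ 2 P z) :
    DifferentiableAt ℝ (fun w => wD P w) z := by
  have hg : DifferentiableAt ℝ (fderiv ℝ P) z :=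
    (h.fderiv_right (m := 1) (by norm_num)).differentiableAt (by norm_num)
  have h1 : DifferentiableAt ℝ (fun w => fderiv ℝ P w 1) z :=
    hg.clm_apply (differentiableAt_const _)
  have hI : DifferentiableAt ℝ (fun w => fderiv ℝ P w Complex.I) z :=
    hg.clm_apply (differentiableAt_const _)
  exact ((h1.sub (hI.const_smul Complex.I)).const_smul ((2:ℂ)⁻¹))

lemma diffAt_wDb {P : ℂ → F} {z : ℂ} (h : ContDiffAt ℝ 2 P z) :
    DifferentiableAt ℝ (fun w => wDb P w) z := by
  have hg : DifferentiableAt ℝ (fderiv ℝ P) z :=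
    (h.fderiv_right (m := 1) (by norm_num)).differentiableAt (by norm_num)
  have h1 : DifferentiableAt ℝ (fun w => fderiv ℝ P w 1) z :=
    hg.clm_apply (differentiableAt_const _)
  have hI : DifferentiableAt ℝ (fun w => fderiv ℝ P w Complex.I) z :=
    hg.clm_apply (differentiableAt_const _)
  exact ((h1.add (hI.const_smul Complex.I)).const_smul ((2:ℂ)⁻¹))

lemma fderiv_fderiv_apply {P : ℂ → F} {z : ℂ} (hg : DifferentiableAt ℝ (fderiv ℝ P) z)
    (v u : ℂ) :
    fderiv ℝ (fun w => fderiv ℝ P w v) z u = fderiv ℝ (fderiv ℝ P) z u v := by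
  rw [fderiv_clm_apply hg (differentiableAt_const v)]
  simp

/-- mixed Wirtinger derivatives commute for C² functions -/
lemma wD_wDb_comm {P : ℂ → F} {z : ℂ} (h : ContDiffAt ℝ 2 P z) :
    wD (fun w => wDb P w) z = wDb (fun w => wD P w) z := by
  have hg : DifferentiableAt ℝ (fderiv ℝ P) z :=
    (h.fderiv_right (m := 1) (by norm_num)).differentiableAt (by norm_num)
  have h1 : DifferentiableAt ℝ (fun w => fderiv ℝ P w 1) z :=
    hg.clm_apply (differentiableAt_const _)
  have hI : DifferentiableAt ℝ (fun w => fderiv ℝ P w Complex.I) z :=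
    hg.clm_apply (differentiableAt_const _)
  have hsymm : fderiv ℝ (fderiv ℝ P) z 1 Complex.I = fderiv ℝ (fderiv ℝ P) z Complex.I 1 :=
    h.isSymmSndFDerivAt (by simp [minSmoothness_of_isRCLikeNormedField]) 1 Complex.I
  have keyb : ∀ u : ℂ, fderiv ℝ (fun w => wDb P w) z u =
      (2:ℂ)⁻¹ • (fderiv ℝ (fderiv ℝ P) z u 1 +
        Complex.I • fderiv ℝ (fderiv ℝ P) z u Complex.I) := by
    intro u
    have e : (fun w => wDb P w) = (fun w =>
        (2:ℂ)⁻¹ • ((fun w' => fderiv ℝ P w' 1) w + Complex.I •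
          (fun w' => fderiv ℝ P w' Complex.I) w)) := rfl
    rw [e, fderiv_fun_const_smul (h1.fun_add (hI.fun_const_smul Complex.I)) ((2:ℂ)⁻¹)]
    rw [fderiv_fun_add h1 (hI.fun_const_smul Complex.I), fderiv_fun_const_smul hI Complex.I]
    simp only [ContinuousLinearMap.smul_apply, ContinuousLinearMap.add_apply]
    rw [fderiv_fderiv_apply hg, fderiv_fderiv_apply hg]
  have key : ∀ u : ℂ, fderiv ℝ (fun w => wD P w) z u =
      (2:ℂ)⁻¹ • (fderiv ℝ (fderiv ℝ P) z u 1 -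
        Complex.I • fderiv ℝ (fderiv ℝ P) z u Complex.I) := by
    intro u
    have e : (fun w => wD P w) = (fun w =>
        (2:ℂ)⁻¹ • ((fun w' => fderiv ℝ P w' 1) w - Complex.I •
          (fun w' => fderiv ℝ P w' Complex.I) w)) := rfl
    rw [e, fderiv_fun_const_smul (h1.fun_sub (hI.fun_const_smul Complex.I)) ((2:ℂ)⁻¹)]
    rw [fderiv_fun_sub h1 (hI.fun_const_smul Complex.I), fderiv_fun_const_smul hI Complex.I]
    simp only [ContinuousLinearMap.smul_apply, ContinuousLinearMap.sub_apply]
    rw [fderiv_fderiv_apply hg, fderiv_fderiv_apply hg]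
  show (2:ℂ)⁻¹ • (fderiv ℝ (fun w => wDb P w) z 1 -
      Complex.I • fderiv ℝ (fun w => wDb P w) z Complex.I) =
    (2:ℂ)⁻¹ • (fderiv ℝ (fun w => wD P w) z 1 +
      Complex.I • fderiv ℝ (fun w => wD P w) z Complex.I)
  rw [keyb 1, keyb Complex.I, key 1, key Complex.I, hsymm]
  module

end helpers

section oper

variable {H : Type*} [NormedAddCommGroup H] [InnerProductSpace ℂ H] [CompleteSpace H]

lemma isBBM_comp' : IsBoundedBilinearMap ℝ
    (fun p : (H →L[ℂ] H) × (H →L[ℂ] H) => p.1 ∘L p.2) := by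
  constructor
  · intro x₁ x₂ y; ext; simp
  · intro c x y; ext; simp
  · intro x y₁ y₂; ext; simp
  · intro c x y; ext; simp
  · exact ⟨1, one_pos, fun x y => by simpa using ContinuousLinearMap.opNorm_comp_le x y⟩

lemma diffAt_compL {A B : ℂ → H →L[ℂ] H} {z : ℂ} (hA : DifferentiableAt ℝ A z)
    (hB : DifferentiableAt ℝ B z) :
    DifferentiableAt ℝ (fun w => A w ∘L B w) z :=
  by have h := (isBBM_comp'.differentiableAt (A z, B z)).comp z (hA.prodMk hB); exact h

lemma fderiv_compL {A B : ℂ → H →L[ℂ] H} {z : ℂ} (hA : DifferentiableAt ℝ A z)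
    (hB : DifferentiableAt ℝ B z) (v : ℂ) :
    fderiv ℝ (fun w => A w ∘L B w) z v =
      fderiv ℝ A z v ∘L B z + A z ∘L fderiv ℝ B z v := by
  have h : HasFDerivAt (fun w => A w ∘L B w)
      ((isBBM_comp'.deriv (A z, B z)).comp ((fderiv ℝ A z).prod (fderiv ℝ B z))) z :=
    by have h := (isBBM_comp'.hasFDerivAt (A z, B z)).comp z (hA.hasFDerivAt.prodMk hB.hasFDerivAt); exact h
  rw [h.fderiv]
  simp [IsBoundedBilinearMap.deriv_apply, add_comm]

lemma wD_compL {A B : ℂ → H →L[ℂ] H} {z : ℂ} (hA : DifferentiableAt ℝ A z)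
    (hB : DifferentiableAt ℝ B z) :
    wD (fun w => A w ∘L B w) z = wD A z ∘L B z + A z ∘L wD B z := by
  unfold wD
  rw [fderiv_compL hA hB 1, fderiv_compL hA hB Complex.I]
  simp only [ContinuousLinearMap.smul_comp, ContinuousLinearMap.comp_smul,
    ContinuousLinearMap.sub_comp, ContinuousLinearMap.comp_sub,
    ContinuousLinearMap.add_comp, ContinuousLinearMap.comp_add,
    smul_add, smul_sub, smul_smul]
  abel

lemma wDb_compL {A B : ℂ → H →L[ℂ] H} {z : ℂ} (hA : DifferentiableAt ℝ A z)
    (hB : DifferentiableAt ℝ B z) :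
    wDb (fun w => A w ∘L B w) z = wDb A z ∘L B z + A z ∘L wDb B z := by
  unfold wDb
  rw [fderiv_compL hA hB 1, fderiv_compL hA hB Complex.I]
  simp only [ContinuousLinearMap.smul_comp, ContinuousLinearMap.comp_smul,
    ContinuousLinearMap.sub_comp, ContinuousLinearMap.comp_sub,
    ContinuousLinearMap.add_comp, ContinuousLinearMap.comp_add,
    smul_add, smul_sub, smul_smul]
  abel

end oper

section mainthm

variable {H : Type*} [NormedAddCommGroup H] [InnerProductSpace ℂ H] [CompleteSpace H]

theorem stmt6'
    (U : Set ℂ) (hU : IsOpen U) (P : ℂ → H →L[ℂ] H)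
    (hsm : ContDiffOn ℝ 2 P U)
    (hproj : ∀ z ∈ U, (P z) ∘L (P z) = P z)
    (hsa : ∀ z ∈ U, ContinuousLinearMap.adjoint (P z) = P z)
    (hPdP : ∀ z ∈ U, (P z) ∘L (wD P z) = 0) :
    ∀ z ∈ U,
      wDb P z = ContinuousLinearMap.adjoint (wD P z) ∧
      wD (fun w => wDb P w) z =
        (wD P z) ∘L (ContinuousLinearMap.adjoint (wD P z))
          - (ContinuousLinearMap.adjoint (wD P z)) ∘L (wD P z) := by
  have hC2 : ∀ w ∈ U, ContDiffAt ℝ 2 P w := fun w hw => hsm.contDiffAt (hU.mem_nhds hw)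
  have hPdiff : ∀ w ∈ U, DifferentiableAt ℝ P w :=
    fun w hw => (hC2 w hw).differentiableAt (by norm_num)
  have hQdiff : ∀ w ∈ U, DifferentiableAt ℝ (fun v => wD P v) w :=
    fun w hw => diffAt_wD (hC2 w hw)
  have hQbdiff : ∀ w ∈ U, DifferentiableAt ℝ (fun v => wDb P v) w :=
    fun w hw => diffAt_wDb (hC2 w hw)
  -- Step 1: the conjugate Wirtinger derivative is the adjoint of the Wirtinger derivative
  have hstar : ∀ w ∈ U, wDb P w = ContinuousLinearMap.adjoint (wD P w) := by
    intro w hw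
    set L : (H →L[ℂ] H) ≃L[ℝ] (H →L[ℂ] H) := starL' ℝ with hL
    have hds : ∀ v : ℂ, star (fderiv ℝ P w v) = fderiv ℝ P w v := by
      intro v
      have hPs : (fun u => star (P u)) =ᶠ[nhds w] P :=
        Filter.eventuallyEq_of_mem (hU.mem_nhds hw) (fun u hu => by
          rw [ContinuousLinearMap.star_eq_adjoint, hsa u hu])
      have hd : HasFDerivAt (fun u => star (P u))
          ((L : (H →L[ℂ] H) →L[ℝ] (H →L[ℂ] H)).comp (fderiv ℝ P w)) w :=
        ((L : (H →L[ℂ] H) →L[ℝ] (H →L[ℂ] H)).hasFDerivAt).comp w (hPdiff w hw).hasFDerivAt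
      have heq := hPs.fderiv_eq (𝕜 := ℝ)
      rw [hd.fderiv] at heq
      calc star (fderiv ℝ P w v)
          = ((L : (H →L[ℂ] H) →L[ℝ] (H →L[ℂ] H)).comp (fderiv ℝ P w)) v := rfl
        _ = fderiv ℝ P w v := by rw [heq]
    rw [← ContinuousLinearMap.star_eq_adjoint]
    show (2:ℂ)⁻¹ • (fderiv ℝ P w 1 + Complex.I • fderiv ℝ P w Complex.I) =
      star ((2:ℂ)⁻¹ • (fderiv ℝ P w 1 - Complex.I • fderiv ℝ P w Complex.I))
    rw [star_smul, star_sub, star_smul, hds 1, hds Complex.I]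
    simp only [Complex.star_def, map_inv₀, map_ofNat, Complex.conj_I]
    module
  -- pointwise algebraic identities on U
  have e2 : ∀ w ∈ U, wDb P w ∘L P w + P w ∘L wDb P w = wDb P w := by
    intro w hw
    have h1 : wDb (fun v => P v ∘L P v) w = wDb P w :=
      wDb_congr (Filter.eventuallyEq_of_mem (hU.mem_nhds hw) (fun u hu => hproj u hu))
    rw [wDb_compL (hPdiff w hw) (hPdiff w hw)] at h1
    exact h1
  have e3 : ∀ w ∈ U, wDb P w ∘L P w = 0 := by
    intro w hw
    have h0 : star (P w * wD P w) = 0 := by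
      rw [show P w * wD P w = P w ∘L wD P w from rfl, hPdP w hw, star_zero]
    rw [star_mul] at h0
    have : star (wD P w) * star (P w) = wDb P w ∘L P w := by
      rw [ContinuousLinearMap.star_eq_adjoint, ContinuousLinearMap.star_eq_adjoint,
        hsa w hw, ← hstar w hw]
      rfl
    rw [this] at h0
    exact h0
  have e4 : ∀ w ∈ U, P w ∘L wDb P w = wDb P w := by
    intro w hw
    have h := e2 w hw
    rw [e3 w hw, zero_add] at h
    exact h
  -- main computation at a point
  intro z hz
  refine ⟨hstar z hz, ?_⟩
  rw [← hstar z hz]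
  have dmix : wDb (fun w => wD P w) z = wD (fun w => wDb P w) z :=
    (wD_wDb_comm (hC2 z hz)).symm
  have dC : wDb (fun w => P w ∘L wD P w) z = 0 := by
    have hev : (fun w => P w ∘L wD P w) =ᶠ[nhds z] (fun _ => (0 : H →L[ℂ] H)) :=
      Filter.eventuallyEq_of_mem (hU.mem_nhds hz) (fun w hw => hPdP w hw)
    rw [wDb_congr hev]
    simp [wDb, fderiv_const]
  rw [wDb_compL (hPdiff z hz) (hQdiff z hz)] at dC
  have d4 : wD (fun w => P w ∘L wDb P w) z = wD (fun w => wDb P w) z :=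
    wD_congr (Filter.eventuallyEq_of_mem (hU.mem_nhds hz) (fun w hw => e4 w hw))
  rw [wD_compL (hPdiff z hz) (hQbdiff z hz)] at d4
  have hPw : P z ∘L wD (fun w => wDb P w) z = -(wDb P z ∘L wD P z) := by
    rw [← dmix]
    exact eq_neg_of_add_eq_zero_right dC
  rw [hPw] at d4
  rw [← d4]
  abel

end mainthm


/-- if `Π` is C², projection-valued, `Π·∂Π = 0`, then
`∂∂̄Π = (∂Π)(∂Π)* − (∂Π)*(∂Π)` (with `∂̄Π = (∂Π)*`). -/
theorem stmt6 {H : Type*} [NormedAddCommGroup H] [InnerProductSpace ℂ H] [CompleteSpace H]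
    (U : Set ℂ) (hU : IsOpen U) (P : ℂ → H →L[ℂ] H)
    (hsm : ContDiffOn ℝ 2 P U)
    (hproj : ∀ z ∈ U, (P z) ∘L (P z) = P z)
    (hsa : ∀ z ∈ U, ContinuousLinearMap.adjoint (P z) = P z)
    (hPdP : ∀ z ∈ U, (P z) ∘L (wD P z) = 0) :
    ∀ z ∈ U,
      wDb P z = ContinuousLinearMap.adjoint (wD P z) ∧
      wD (fun w => wDb P w) z =
        (wD P z) ∘L (ContinuousLinearMap.adjoint (wD P z))
          - (ContinuousLinearMap.adjoint (wD P z)) ∘L (wD P z) := by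
  exact stmt6' U hU P hsm hproj hsa hPdP
end

section
/- Let Π be a C² smooth projection-valued function with Π·∂Π = 0 and let ξ = Π·h with ∂h = 0. Then ⟨ξ, Δξ⟩ = −‖∂ξ‖² = −‖(∂Π)ξ‖² pointwise, where Δ = ∂∂̄. -/
open Complex
open scoped InnerProductSpace

open ContinuousLinearMap

section Aux
variable {F : Type*} [NormedAddCommGroup F] [NormedSpace ℂ F]

-- L1
lemma fderiv_clm_apply_c {P : ℂ → F →L[ℂ] F} {u : ℂ → F} {z : ℂ}
    (hP : DifferentiableAt ℝ P z) (hu : DifferentiableAt ℝ u z) (v : ℂ) :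
    fderiv ℝ (fun w => P w (u w)) z v
      = P z (fderiv ℝ u z v) + (fderiv ℝ P z v) (u z) := by
  set rs := ContinuousLinearMap.restrictScalarsL ℂ F F ℝ ℝ with hrs
  have hQ : HasFDerivAt (fun w => rs (P w)) (rs ∘L fderiv ℝ P z) z :=
    rs.hasFDerivAt.comp z hP.hasFDerivAt
  have h2 := hQ.clm_apply hu.hasFDerivAt
  have h3 : fderiv ℝ (fun w => (rs (P w)) (u w)) z
      = (rs (P z)).comp (fderiv ℝ u z) + (rs ∘L fderiv ℝ P z).flip (u z) := h2.fderiv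
  have h4 : (fun w => (rs (P w)) (u w)) = fun w => P w (u w) := rfl
  rw [h4] at h3
  rw [h3]
  rfl

-- L2
lemma wD_clm_apply_c {P : ℂ → F →L[ℂ] F} {u : ℂ → F} {z : ℂ}
    (hP : DifferentiableAt ℝ P z) (hu : DifferentiableAt ℝ u z) :
    wD (fun w => P w (u w)) z = (wD P z) (u z) + P z (wD u z) := by
  simp only [wD, fderiv_clm_apply_c hP hu]
  rw [ContinuousLinearMap.smul_apply, ContinuousLinearMap.sub_apply,
    ContinuousLinearMap.smul_apply, map_smul, map_sub, map_smul]
  rw [smul_sub, smul_add, smul_add, smul_add, smul_sub]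
  module

-- L3
lemma hasFDerivAt_wD {f : ℂ → F} {z : ℂ} (hf : ContDiffAt ℝ 2 f z) :
    HasFDerivAt (wD f)
      ((2:ℂ)⁻¹ • (((apply ℝ F (1:ℂ)) ∘L fderiv ℝ (fderiv ℝ f) z)
        - Complex.I • ((apply ℝ F (Complex.I)) ∘L fderiv ℝ (fderiv ℝ f) z))) z := by
  have hgd : DifferentiableAt ℝ (fderiv ℝ f) z :=
    (hf.fderiv_right (m := 1) (by norm_num)).differentiableAt (by norm_num)
  have hg := hgd.hasFDerivAt
  have h1 := (apply ℝ F (1:ℂ)).hasFDerivAt.comp z hg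
  have hI := (apply ℝ F (Complex.I)).hasFDerivAt.comp z hg
  exact ((h1.sub (hI.const_smul Complex.I)).const_smul ((2:ℂ)⁻¹))

lemma hasFDerivAt_wDb {f : ℂ → F} {z : ℂ} (hf : ContDiffAt ℝ 2 f z) :
    HasFDerivAt (wDb f)
      ((2:ℂ)⁻¹ • (((apply ℝ F (1:ℂ)) ∘L fderiv ℝ (fderiv ℝ f) z)
        + Complex.I • ((apply ℝ F (Complex.I)) ∘L fderiv ℝ (fderiv ℝ f) z))) z := by
  have hgd : DifferentiableAt ℝ (fderiv ℝ f) z :=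
    (hf.fderiv_right (m := 1) (by norm_num)).differentiableAt (by norm_num)
  have hg := hgd.hasFDerivAt
  have h1 := (apply ℝ F (1:ℂ)).hasFDerivAt.comp z hg
  have hI := (apply ℝ F (Complex.I)).hasFDerivAt.comp z hg
  exact ((h1.add (hI.const_smul Complex.I)).const_smul ((2:ℂ)⁻¹))

lemma fderiv_wD_apply {f : ℂ → F} {z : ℂ} (hf : ContDiffAt ℝ 2 f z) (v : ℂ) :
    fderiv ℝ (wD f) z v
      = (2:ℂ)⁻¹ • (fderiv ℝ (fderiv ℝ f) z v 1
          - Complex.I • fderiv ℝ (fderiv ℝ f) z v Complex.I) := by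
  rw [(hasFDerivAt_wD hf).fderiv]; rfl

lemma fderiv_wDb_apply {f : ℂ → F} {z : ℂ} (hf : ContDiffAt ℝ 2 f z) (v : ℂ) :
    fderiv ℝ (wDb f) z v
      = (2:ℂ)⁻¹ • (fderiv ℝ (fderiv ℝ f) z v 1
          + Complex.I • fderiv ℝ (fderiv ℝ f) z v Complex.I) := by
  rw [(hasFDerivAt_wDb hf).fderiv]; rfl

-- L4
lemma wD_wDb_comm_s8 {f : ℂ → F} {z : ℂ} (hf : ContDiffAt ℝ 2 f z) :
    wD (wDb f) z = wDb (wD f) z := by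
  have hsymm : fderiv ℝ (fderiv ℝ f) z 1 Complex.I
      = fderiv ℝ (fderiv ℝ f) z Complex.I 1 :=
    (hf.isSymmSndFDerivAt (by norm_num)) 1 Complex.I
  simp only [wD, wDb, fderiv_wD_apply hf, fderiv_wDb_apply hf]
  rw [hsymm]
  module

end Aux

/-- with `ξ = Π·h`, `∂h = 0`, one has
`⟨ξ, Δξ⟩ = −‖∂ξ‖² = −‖(∂Π)ξ‖²` pointwise, where `Δ = ∂∂̄`. -/
theorem stmt8 {H : Type*} [NormedAddCommGroup H] [InnerProductSpace ℂ H] [CompleteSpace H]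
    (U : Set ℂ) (hU : IsOpen U) (P : ℂ → H →L[ℂ] H)
    (hsm : ContDiffOn ℝ 2 P U)
    (hproj : ∀ z ∈ U, (P z) ∘L (P z) = P z)
    (hsa : ∀ z ∈ U, ContinuousLinearMap.adjoint (P z) = P z)
    (hPdP : ∀ z ∈ U, (P z) ∘L (wD P z) = 0)
    (h : ℂ → H) (hh : ContDiffOn ℝ 2 h U)
    (hanti : ∀ z ∈ U, wD h z = 0)
    (ξ : ℂ → H) (hξ : ∀ z, ξ z = P z (h z)) :
    ∀ z ∈ U,
      ⟪wD (fun w => wDb ξ w) z, ξ z⟫_ℂ = -((‖wD ξ z‖^2 : ℝ) : ℂ) ∧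
      ‖wD ξ z‖ = ‖(wD P z) (ξ z)‖ := by
  obtain rfl : ξ = fun w => P w (h w) := funext hξ
  set ξf : ℂ → H := fun w => P w (h w) with hξf
  -- basic differentiability facts
  have hPd : ∀ w ∈ U, DifferentiableAt ℝ P w := fun w hw =>
    (hsm.contDiffAt (hU.mem_nhds hw)).differentiableAt (by norm_num)
  have hhd : ∀ w ∈ U, DifferentiableAt ℝ h w := fun w hw =>
    (hh.contDiffAt (hU.mem_nhds hw)).differentiableAt (by norm_num)
  have hxiC2 : ∀ w ∈ U, ContDiffAt ℝ 2 ξf w := by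
    intro w hw
    have hPw := hsm.contDiffAt (hU.mem_nhds hw)
    have hhw := hh.contDiffAt (hU.mem_nhds hw)
    have hQ : ContDiffAt ℝ 2
        (fun w => (ContinuousLinearMap.restrictScalarsL ℂ H H ℝ ℝ) (P w)) w :=
      ((ContinuousLinearMap.restrictScalarsL ℂ H H ℝ ℝ).contDiff.contDiffAt).comp w hPw
    exact hQ.clm_apply hhw
  have hxid : ∀ w ∈ U, DifferentiableAt ℝ ξf w := fun w hw =>
    (hxiC2 w hw).differentiableAt (by norm_num)
  -- wD ξ = (wD P) h on U
  have hwDxi : ∀ w ∈ U, wD ξf w = (wD P w) (h w) := by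
    intro w hw
    rw [hξf, wD_clm_apply_c (hPd w hw) (hhd w hw), hanti w hw, map_zero, add_zero]
  -- P (wD ξ) = 0 on U
  have hPwD : ∀ w ∈ U, P w (wD ξf w) = 0 := by
    intro w hw
    rw [hwDxi w hw]
    have h0 : P w ((wD P w) (h w)) = (P w ∘L wD P w) (h w) := rfl
    rw [h0, hPdP w hw]; rfl
  -- ⟪wD ξ, ξ⟫ = 0 on U
  have hinner0 : ∀ w ∈ U, ⟪wD ξf w, ξf w⟫_ℂ = 0 := by
    intro w hw
    have h1 : ⟪wD ξf w, P w (h w)⟫_ℂ = ⟪P w (wD ξf w), h w⟫_ℂ := by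
      conv_rhs => rw [← hsa w hw]
      rw [ContinuousLinearMap.adjoint_inner_left]
    show ⟪wD ξf w, P w (h w)⟫_ℂ = 0
    rw [h1, hPwD w hw, inner_zero_left]
  intro z hz
  constructor
  · -- main identity
    have hC2 := hxiC2 z hz
    have hcomm : wD (wDb ξf) z = wDb (wD ξf) z := wD_wDb_comm_s8 hC2
    have hwDd : DifferentiableAt ℝ (wD ξf) z := (hasFDerivAt_wD hC2).differentiableAt
    have hg0 : (fun w => ⟪wD ξf w, ξf w⟫_ℂ) =ᶠ[nhds z] (fun _ => (0:ℂ)) :=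
      Filter.eventuallyEq_of_mem (hU.mem_nhds hz) hinner0
    have hfg : fderiv ℝ (fun w => ⟪wD ξf w, ξf w⟫_ℂ) z = 0 := by
      rw [hg0.fderiv_eq]; simp
    have hA : ∀ v, ⟪fderiv ℝ (wD ξf) z v, ξf z⟫_ℂ = -⟪wD ξf z, fderiv ℝ ξf z v⟫_ℂ := by
      intro v
      have h2 := fderiv_inner_apply (𝕜 := ℂ) hwDd (hxid z hz) v
      rw [hfg] at h2
      simp only [ContinuousLinearMap.zero_apply] at h2
      exact eq_neg_of_add_eq_zero_right h2.symm
    show ⟪wD (wDb ξf) z, ξf z⟫_ℂ = -((‖wD ξf z‖^2 : ℝ) : ℂ)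
    rw [hcomm]
    have hrhs : -((‖wD ξf z‖^2 : ℝ) : ℂ) = -⟪wD ξf z, wD ξf z⟫_ℂ := by
      rw [inner_self_eq_norm_sq_to_K]; push_cast; norm_num
    rw [hrhs]
    show ⟪(2:ℂ)⁻¹ • (fderiv ℝ (wD ξf) z 1 + Complex.I • fderiv ℝ (wD ξf) z Complex.I),
        ξf z⟫_ℂ = -⟪wD ξf z, wD ξf z⟫_ℂ
    have hx : ∀ x : H, ⟪x, wD ξf z⟫_ℂ
        = (2:ℂ)⁻¹ * (⟪x, fderiv ℝ ξf z 1⟫_ℂ - Complex.I * ⟪x, fderiv ℝ ξf z Complex.I⟫_ℂ) := by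
      intro x
      rw [wD, inner_smul_right, inner_sub_right, inner_smul_right]
    rw [inner_smul_left, inner_add_left, inner_smul_left, hA 1, hA Complex.I,
      hx (wD ξf z)]
    simp only [map_inv₀, Complex.conj_ofNat, Complex.conj_I]
    ring
  · -- norm identity
    have hP2 : ∀ w ∈ U, P w (ξf w) = ξf w := by
      intro w hw
      have h0 : P w (P w (h w)) = (P w ∘L P w) (h w) := rfl
      show P w (P w (h w)) = P w (h w)
      rw [h0, hproj w hw]
    have hpsi : (fun w => P w (ξf w)) =ᶠ[nhds z] ξf :=
      Filter.eventuallyEq_of_mem (hU.mem_nhds hz) hP2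
    have hfd : wD (fun w => P w (ξf w)) z = wD ξf z := by
      rw [wD, wD, hpsi.fderiv_eq]
    have hleib : wD (fun w => P w (ξf w)) z = (wD P z) (ξf z) + P z (wD ξf z) :=
      wD_clm_apply_c (hPd z hz) (hxid z hz)
    rw [hfd, hPwD z hz, add_zero] at hleib
    rw [← hleib]
end

section
/- Let f : 𝔻 → E be holomorphic with f(z) ≠ 0 for all z. Then the normalized Laplacian Δ(ln ‖f(z)‖²) equals (‖f(z)‖²‖f'(z)‖² − |⟨f'(z), f(z)⟩|²)/‖f(z)‖⁴, where Δ = ∂∂̄. In particular, ln‖f(z)‖² is subharmonic. -/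
open Complex ComplexConjugate
open scoped InnerProductSpace

lemma wD_of_hasDerivAt {F : Type*} [NormedAddCommGroup F] [NormedSpace ℂ F]
    {f : ℂ → F} {F' : F} {w : ℂ} (h : HasDerivAt f F' w) : wD f w = F' := by
  have hre : HasFDerivAt f
      (((1 : ℂ →L[ℂ] ℂ).smulRight F').restrictScalars ℝ) w :=
    h.hasFDerivAt.restrictScalars ℝ
  rw [wD, hre.fderiv]
  simp [smul_smul, Complex.I_mul_I, two_smul, smul_add]
  module

lemma wDb_log {E : Type*} [NormedAddCommGroup E] [InnerProductSpace ℂ E]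
    {f : ℂ → E} {F' : E} {w : ℂ} (h : HasDerivAt f F' w) (hw : f w ≠ 0) :
    wDb (fun v => ((Real.log (‖f v‖^2) : ℝ) : ℂ)) w
      = ⟪F', f w⟫_ℂ / ((‖f w‖^2 : ℝ) : ℂ) := by
  have hre : HasFDerivAt f
      (((1 : ℂ →L[ℂ] ℂ).smulRight F').restrictScalars ℝ) w :=
    h.hasFDerivAt.restrictScalars ℝ
  have hinner := hre.inner ℂ hre
  have hn0 : 0 < ‖f w‖ := norm_pos_iff.mpr hw
  have hu : (0:ℝ) < ‖f w‖^2 := by positivity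
  have hns : HasFDerivAt (fun v => ‖f v‖^2)
      (Complex.reCLM.comp ((fderivInnerCLM ℂ (f w, f w)).comp
        ((((1 : ℂ →L[ℂ] ℂ).smulRight F').restrictScalars ℝ).prod
         (((1 : ℂ →L[ℂ] ℂ).smulRight F').restrictScalars ℝ)))) w := by
    have := Complex.reCLM.hasFDerivAt.comp w hinner
    refine this.congr_of_eventuallyEq (Filter.Eventually.of_forall fun v => ?_)
    simpa using (inner_self_eq_norm_sq (𝕜 := ℂ) (f v)).symm
  have hlog := (Real.hasDerivAt_log hu.ne').comp_hasFDerivAt w hns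
  have hcoe := Complex.ofRealCLM.hasFDerivAt.comp w hlog
  have hcoe' : HasFDerivAt (fun v => ((Real.log (‖f v‖^2) : ℝ) : ℂ)) _ w := hcoe
  rw [wDb, hcoe'.fderiv]
  set a := ⟪f w, F'⟫_ℂ with ha
  have hconj : conj a = ⟪F', f w⟫_ℂ := inner_conj_symm _ _
  have e1 : ∀ v : ℂ, ((fderivInnerCLM ℂ (f w, f w)).comp
        ((((1 : ℂ →L[ℂ] ℂ).smulRight F').restrictScalars ℝ).prod
         (((1 : ℂ →L[ℂ] ℂ).smulRight F').restrictScalars ℝ))) v = v * a + conj (v * a) := by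
    intro v
    simp [fderivInnerCLM_apply, inner_smul_right, inner_smul_left, ← ha, map_mul, hconj]
  simp only [ContinuousLinearMap.comp_apply, ContinuousLinearMap.smul_apply, e1,
    Complex.reCLM_apply, Complex.ofRealCLM_apply]
  have hre1 : ∀ v : ℂ, (v * a + conj (v * a)).re = 2 * (v * a).re := by
    intro v; simp; ring
  rw [hre1 1, hre1 Complex.I]
  rw [← hconj]
  have h1a : ((1:ℂ) * a).re = a.re := by simp
  have hIa : (Complex.I * a).re = -a.im := by simp
  rw [h1a, hIa]
  have hu' : ((‖f w‖^2 : ℝ) : ℂ) ≠ 0 := by exact_mod_cast hu.ne'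
  have hca : conj a = (a.re : ℂ) - (a.im : ℂ) * Complex.I := by
    rw [Complex.ext_iff]; simp
  simp only [smul_eq_mul]
  push_cast
  rw [hca]
  field_simp
  ring

/-- for holomorphic nonvanishing `f`,
`Δ(ln‖f‖²) = (‖f‖²‖f'‖² − |⟨f',f⟩|²)/‖f‖⁴ ≥ 0`; in particular `ln‖f‖²` is subharmonic. -/
theorem stmt13 {E : Type*} [NormedAddCommGroup E] [InnerProductSpace ℂ E] [CompleteSpace E]
    (f : ℂ → E) (hf : DifferentiableOn ℂ f (Metric.ball 0 1))
    (hne : ∀ z ∈ Metric.ball (0:ℂ) 1, f z ≠ 0) :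
    ∀ z ∈ Metric.ball (0:ℂ) 1,
      wD (fun w => wDb (fun v => ((Real.log (‖f v‖^2) : ℝ) : ℂ)) w) z =
        (((‖f z‖^2 * ‖wD f z‖^2 - ‖⟪f z, wD f z⟫_ℂ‖^2) / ‖f z‖^4 : ℝ) : ℂ) ∧
      0 ≤ (‖f z‖^2 * ‖wD f z‖^2 - ‖⟪f z, wD f z⟫_ℂ‖^2) / ‖f z‖^4 := by
  intro z hz
  have hA : AnalyticOnNhd ℂ f (Metric.ball 0 1) := hf.analyticOnNhd Metric.isOpen_ball
  have hFd : AnalyticOnNhd ℂ (deriv f) (Metric.ball 0 1) := hA.deriv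
  have hfz : HasDerivAt f (deriv f z) z := ((hA z hz).differentiableAt).hasDerivAt
  have hFz : HasDerivAt (deriv f) (deriv (deriv f) z) z :=
    ((hFd z hz).differentiableAt).hasDerivAt
  have hwD : wD f z = deriv f z := wD_of_hasDerivAt hfz
  have hCS : ‖⟪f z, wD f z⟫_ℂ‖ ≤ ‖f z‖ * ‖wD f z‖ := norm_inner_le_norm _ _
  have hnonneg : 0 ≤ (‖f z‖^2 * ‖wD f z‖^2 - ‖⟪f z, wD f z⟫_ℂ‖^2) / ‖f z‖^4 := by
    apply div_nonneg _ (by positivity)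
    nlinarith [norm_nonneg (⟪f z, wD f z⟫_ℂ), norm_nonneg (f z), norm_nonneg (wD f z)]
  refine ⟨?_, hnonneg⟩
  have hev : (fun w => wDb (fun v => ((Real.log (‖f v‖^2) : ℝ) : ℂ)) w)
      =ᶠ[nhds z] (fun w => ⟪deriv f w, f w⟫_ℂ * (((‖f w‖^2 : ℝ) : ℂ))⁻¹) := by
    filter_upwards [Metric.isOpen_ball.mem_nhds hz] with w hw
    rw [wDb_log ((hA w hw).differentiableAt.hasDerivAt) (hne w hw), div_eq_mul_inv]
  have hfder := hev.fderiv_eq (𝕜 := ℝ)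
  rw [wD, hfder]
  have hn0 : 0 < ‖f z‖ := norm_pos_iff.mpr (hne z hz)
  have hu : (0:ℝ) < ‖f z‖^2 := by positivity
  have huC : ((‖f z‖^2 : ℝ) : ℂ) ≠ 0 := by exact_mod_cast hu.ne'
  have hre1 : HasFDerivAt f
      (((1 : ℂ →L[ℂ] ℂ).smulRight (deriv f z)).restrictScalars ℝ) z :=
    hfz.hasFDerivAt.restrictScalars ℝ
  have hre2 : HasFDerivAt (deriv f)
      (((1 : ℂ →L[ℂ] ℂ).smulRight (deriv (deriv f) z)).restrictScalars ℝ) z :=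
    hFz.hasFDerivAt.restrictScalars ℝ
  have hB := hre2.inner ℂ hre1
  have hinner := hre1.inner ℂ hre1
  have hns : HasFDerivAt (fun v => ((‖f v‖^2 : ℝ) : ℂ))
      (Complex.ofRealCLM.comp (Complex.reCLM.comp
        ((fderivInnerCLM ℂ (f z, f z)).comp
        ((((1 : ℂ →L[ℂ] ℂ).smulRight (deriv f z)).restrictScalars ℝ).prod
         (((1 : ℂ →L[ℂ] ℂ).smulRight (deriv f z)).restrictScalars ℝ))))) z := by
    have := Complex.ofRealCLM.hasFDerivAt.comp z (Complex.reCLM.hasFDerivAt.comp z hinner)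
    refine this.congr_of_eventuallyEq (Filter.Eventually.of_forall fun v => ?_)
    simp only [Function.comp_apply, Complex.reCLM_apply, Complex.ofRealCLM_apply]
    norm_cast
    simpa using (inner_self_eq_norm_sq (𝕜 := ℂ) (f v)).symm
  have hinv := (hasFDerivAt_inv' (𝕜 := ℝ) huC).comp z hns
  have hq : HasFDerivAt (fun w => ⟪deriv f w, f w⟫_ℂ * (((‖f w‖^2 : ℝ) : ℂ))⁻¹) _ z :=
    hB.mul' hinv
  rw [hq.fderiv]
  simp only [ContinuousLinearMap.add_apply, ContinuousLinearMap.smul_apply,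
    ContinuousLinearMap.smulRight_apply, ContinuousLinearMap.comp_apply,
    ContinuousLinearMap.prod_apply, ContinuousLinearMap.coe_restrictScalars',
    ContinuousLinearMap.smulRight_apply, ContinuousLinearMap.one_apply,
    fderivInnerCLM_apply, inner_smul_right, inner_smul_left,
    ContinuousLinearMap.neg_apply, ContinuousLinearMap.mulLeftRight_apply,
    Complex.reCLM_apply, Complex.ofRealCLM_apply, hwD]
  have hb : ⟪deriv f z, f z⟫_ℂ = conj ⟪f z, deriv f z⟫_ℂ := (inner_conj_symm _ _).symm
  have hr : ⟪deriv f z, deriv f z⟫_ℂ = ((‖deriv f z‖^2 : ℝ) : ℂ) := by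
    simpa using inner_self_eq_norm_sq_to_K (𝕜 := ℂ) (deriv f z)
  set a := ⟪f z, deriv f z⟫_ℂ with ha
  set S := ⟪deriv (deriv f) z, f z⟫_ℂ with hS
  rw [hb, hr]
  have hna : ‖a‖^2 = a.re*a.re + a.im*a.im := by
    rw [Complex.sq_norm, Complex.normSq_apply]
  have e1 : ((1:ℂ) * a + (starRingEnd ℂ) 1 * conj a).re = 2 * a.re := by
    simp; ring
  have e2 : (Complex.I * a + (starRingEnd ℂ) Complex.I * conj a).re = -(2 * a.im) := by
    simp; ring
  rw [e1, e2]
  have hca : conj a = (a.re : ℂ) - (a.im : ℂ) * Complex.I := by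
    rw [Complex.ext_iff]; simp
  have hcI : (starRingEnd ℂ) Complex.I = -Complex.I := Complex.conj_I
  have hu4 : (‖f z‖^4 : ℝ) = (‖f z‖^2) * (‖f z‖^2) := by ring
  rw [hca, hcI, hna, hu4]
  set u : ℝ := ‖f z‖^2 with hudef
  set r : ℝ := ‖deriv f z‖^2 with hrdef
  have hu' : u ≠ 0 := hu.ne'
  rw [Complex.ext_iff]
  constructor <;>
  · simp only [smul_eq_mul, op_smul_eq_mul, map_one, Complex.re_ofNat, Complex.im_ofNat,
      Complex.normSq_ofNat, Complex.mul_re, Complex.mul_im, Complex.add_re, Complex.add_im,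
      Complex.sub_re, Complex.sub_im, Complex.neg_re, Complex.neg_im, Complex.ofReal_re,
      Complex.ofReal_im, Complex.I_re, Complex.I_im, Complex.inv_re, Complex.inv_im,
      Complex.normSq_ofReal, Complex.div_ofReal_re, Complex.div_ofReal_im, one_mul, mul_one,
      mul_zero, zero_mul, zero_add, add_zero, neg_zero, zero_sub, sub_zero, neg_neg]
    field_simp
    ring
end

section
/- Let M : (-∞, 0] → ℝ be C² with M ≥ 0, M' ≥ 0, M'' ≥ 0 and M·M'' ≥ (M')², and let u ≤ 0 be a C² subharmonic function on a domain. Then for any Hilbert-space-valued holomorphic function h, the function z ↦ M(u(z))·‖h(z)‖² satisfies Δ(M(u)‖h‖²) ≥ M'(u)·Δu·‖h‖² pointwise, where Δ = ∂∂̄. -/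
open Complex
open scoped InnerProductSpace

/-- Normalized Laplacian `Δ = ∂∂̄`. -/
noncomputable def lap {F : Type*} [NormedAddCommGroup F] [NormedSpace ℂ F]
    (f : ℂ → F) (z : ℂ) : F :=
  wD (fun w => wDb f w) z

lemma lap_ofReal_re {g : ℂ → ℝ} {U : Set ℂ} (hU : IsOpen U) (hg : ContDiffOn ℝ 2 g U)
    {z : ℂ} (hz : z ∈ U) :
    (lap (fun w => ((g w : ℝ) : ℂ)) z).re =
      (fderiv ℝ (fun w => fderiv ℝ g w 1) z 1
        + fderiv ℝ (fun w => fderiv ℝ g w Complex.I) z Complex.I) / 4 := by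
  have hmem : U ∈ nhds z := hU.mem_nhds hz
  have hgd : ∀ w ∈ U, DifferentiableAt ℝ g w := fun w hw =>
    (hg.differentiableOn two_ne_zero).differentiableAt (hU.mem_nhds hw)
  have hkey : ∀ w ∈ U, wDb (fun w => ((g w : ℝ) : ℂ)) w
      = (2:ℂ)⁻¹ • (((fderiv ℝ g w 1 : ℝ) : ℂ)
          + Complex.I • ((fderiv ℝ g w Complex.I : ℝ) : ℂ)) := by
    intro w hw
    have hfd : HasFDerivAt (fun w => ((g w : ℝ) : ℂ))
        (Complex.ofRealCLM.comp (fderiv ℝ g w)) w :=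
      Complex.ofRealCLM.hasFDerivAt.comp w (hgd w hw).hasFDerivAt
    simp [wDb, hfd.fderiv]
  have hEq : (fun w => wDb (fun w => ((g w : ℝ) : ℂ)) w)
      =ᶠ[nhds z] (fun w => (2:ℂ)⁻¹ • (((fderiv ℝ g w 1 : ℝ) : ℂ)
          + Complex.I • ((fderiv ℝ g w Complex.I : ℝ) : ℂ))) :=
    Filter.eventuallyEq_of_mem hmem hkey
  have hg2 : ContDiffAt ℝ 2 g z := hg.contDiffAt hmem
  have hf' : ContDiffAt ℝ 1 (fderiv ℝ g) z := hg2.fderiv_right (by norm_num)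
  have hd1 : DifferentiableAt ℝ (fun w => fderiv ℝ g w 1) z :=
    (hf'.differentiableAt one_ne_zero).clm_apply (differentiableAt_const _)
  have hdI : DifferentiableAt ℝ (fun w => fderiv ℝ g w Complex.I) z :=
    (hf'.differentiableAt one_ne_zero).clm_apply (differentiableAt_const _)
  have hG : HasFDerivAt (fun w => (2:ℂ)⁻¹ • (((fderiv ℝ g w 1 : ℝ) : ℂ)
          + Complex.I • ((fderiv ℝ g w Complex.I : ℝ) : ℂ)))
      ((2:ℂ)⁻¹ • ((Complex.ofRealCLM.comp (fderiv ℝ (fun w => fderiv ℝ g w 1) z))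
        + Complex.I • (Complex.ofRealCLM.comp
            (fderiv ℝ (fun w => fderiv ℝ g w Complex.I) z)))) z :=
    (((Complex.ofRealCLM.hasFDerivAt.comp z hd1.hasFDerivAt).add
      ((Complex.ofRealCLM.hasFDerivAt.comp z hdI.hasFDerivAt).const_smul Complex.I)).const_smul
        ((2:ℂ)⁻¹))
  have hfd2 : fderiv ℝ (fun w => wDb (fun w => ((g w : ℝ) : ℂ)) w) z
      = (2:ℂ)⁻¹ • ((Complex.ofRealCLM.comp (fderiv ℝ (fun w => fderiv ℝ g w 1) z))
        + Complex.I • (Complex.ofRealCLM.comp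
            (fderiv ℝ (fun w => fderiv ℝ g w Complex.I) z))) := by
    rw [hEq.fderiv_eq, hG.fderiv]
  simp only [lap, wD, hfd2]
  simp only [ContinuousLinearMap.smul_apply, ContinuousLinearMap.add_apply,
    ContinuousLinearMap.coe_smul', Pi.smul_apply, ContinuousLinearMap.comp_apply,
    Complex.ofRealCLM_apply, smul_eq_mul]
  simp [Complex.ext_iff, Complex.mul_re, Complex.mul_im]
  ring

set_option maxHeartbeats 2000000 in
/-- for `M` with `[[M,M'],[M',M'']] ≥ 0` on `(-∞,0]`, `u ≤ 0` C²
subharmonic, and `h` holomorphic Hilbert-space valued,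
`Δ(M(u)‖h‖²) ≥ M'(u)·Δu·‖h‖²` pointwise. -/
theorem stmt18 {H : Type*} [NormedAddCommGroup H] [InnerProductSpace ℂ H] [CompleteSpace H]
    (M : ℝ → ℝ) (hM : ContDiff ℝ 2 M)
    (hM0 : ∀ x ≤ (0:ℝ), 0 ≤ M x)
    (hM1 : ∀ x ≤ (0:ℝ), 0 ≤ deriv M x)
    (hM2 : ∀ x ≤ (0:ℝ), 0 ≤ deriv (deriv M) x)
    (hMdet : ∀ x ≤ (0:ℝ), (deriv M x)^2 ≤ M x * deriv (deriv M) x)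
    (U : Set ℂ) (hU : IsOpen U)
    (u : ℂ → ℝ) (hu : ContDiffOn ℝ 2 (fun z => u z) U)
    (hu0 : ∀ z ∈ U, u z ≤ 0)
    (husub : ∀ z ∈ U, 0 ≤ (lap (fun w => ((u w : ℝ) : ℂ)) z).re)
    (h : ℂ → H) (hh : DifferentiableOn ℂ h U) :
    ∀ z ∈ U,
      deriv M (u z) * (lap (fun w => ((u w : ℝ) : ℂ)) z).re * ‖h z‖^2 ≤
        (lap (fun w => ((M (u w) * ‖h w‖^2 : ℝ) : ℂ)) z).re := by
  intro z hz
  have hmem : U ∈ nhds z := hU.mem_nhds hz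
  -- M facts
  have hMd : Differentiable ℝ M := hM.differentiable two_ne_zero
  have hM2' : ContDiff ℝ ((1:WithTop ℕ∞)+1) M := by exact_mod_cast hM
  have hMd' : Differentiable ℝ (deriv M) :=
    ((contDiff_succ_iff_deriv.mp hM2').2.2).differentiable one_ne_zero
  -- u facts
  have hud : ∀ w ∈ U, DifferentiableAt ℝ u w := fun w hw =>
    (hu.differentiableOn two_ne_zero).differentiableAt (hU.mem_nhds hw)
  have hu1 : ContDiffAt ℝ 1 (fderiv ℝ u) z := (hu.contDiffAt hmem).fderiv_right (by norm_num)
  have hu1v : ∀ v : ℂ, DifferentiableAt ℝ (fun w => fderiv ℝ u w v) z := fun v =>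
    (hu1.differentiableAt one_ne_zero).clm_apply (differentiableAt_const _)
  -- h facts
  have hana : AnalyticOnNhd ℂ h U := hh.analyticOnNhd hU
  have hana' : AnalyticOnNhd ℂ (deriv h) U := hana.deriv
  have hkey : ∀ (f : ℂ → H), (∀ w ∈ U, DifferentiableAt ℂ f w) → ∀ w ∈ U, ∀ v : ℂ,
      fderiv ℝ f w v = v • deriv f w := by
    intro f hf w hw v
    have h1 : fderiv ℝ f w = (fderiv ℂ f w).restrictScalars ℝ :=
      ((hf w hw).hasFDerivAt.restrictScalars ℝ).fderiv
    rw [h1]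
    show fderiv ℂ f w v = v • deriv f w
    calc fderiv ℂ f w v = fderiv ℂ f w (v • 1) := by rw [smul_eq_mul, mul_one]
      _ = v • fderiv ℂ f w 1 := (fderiv ℂ f w).map_smul v 1
      _ = v • deriv f w := by rfl
  have hhd : ∀ w ∈ U, DifferentiableAt ℂ h w := fun w hw => (hana w hw).differentiableAt
  have hh'd : ∀ w ∈ U, DifferentiableAt ℂ (deriv h) w := fun w hw => (hana' w hw).differentiableAt
  have hDh : ∀ w ∈ U, ∀ v : ℂ, fderiv ℝ h w v = v • deriv h w := hkey h hhd
  have hDh' : ∀ w ∈ U, ∀ v : ℂ, fderiv ℝ (deriv h) w v = v • deriv (deriv h) w := hkey _ hh'd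
  have hhdR : ∀ w ∈ U, DifferentiableAt ℝ h w := fun w hw => (hhd w hw).restrictScalars ℝ
  -- φ facts
  have hφψ : ∀ x : H, ‖x‖^2 = (⟪x, x⟫_ℂ).re := fun x => by
    simpa using (inner_self_eq_norm_sq (𝕜 := ℂ) x).symm
  have hfun : (fun w => ‖h w‖^2) = (fun w => (⟪h w, h w⟫_ℂ).re) :=
    funext fun w => hφψ (h w)
  have hψd : ∀ w ∈ U, DifferentiableAt ℝ (fun w => (⟪h w, h w⟫_ℂ)) w := fun w hw =>
    (hhdR w hw).inner ℂ (hhdR w hw)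
  have hφd : ∀ w ∈ U, DifferentiableAt ℝ (fun w => ‖h w‖^2) w := by
    intro w hw
    rw [hfun]
    exact Complex.reCLM.differentiableAt.comp w (hψd w hw)
  have hDφ : ∀ w ∈ U, ∀ v : ℂ, fderiv ℝ (fun w => ‖h w‖^2) w v
      = 2 * (⟪v • deriv h w, h w⟫_ℂ).re := by
    intro w hw v
    rw [hfun]
    have h1 : fderiv ℝ (fun w => (⟪h w, h w⟫_ℂ).re) w
        = Complex.reCLM.comp (fderiv ℝ (fun w => (⟪h w, h w⟫_ℂ)) w) :=
      (Complex.reCLM.hasFDerivAt.comp w (hψd w hw).hasFDerivAt).fderiv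
    rw [h1]
    have h2 := fderiv_inner_apply (𝕜 := ℂ) (hhdR w hw) (hhdR w hw) v
    simp only [ContinuousLinearMap.comp_apply, Complex.reCLM_apply, h2, hDh w hw v]
    have h3 : (⟪h w, v • deriv h w⟫_ℂ).re = (⟪v • deriv h w, h w⟫_ℂ).re := by
      exact inner_re_symm (𝕜 := ℂ) (h w) (v • deriv h w)
    rw [Complex.add_re, h3]; ring
  -- φ is C² at z
  have hφC : ContDiffAt ℝ 2 (fun w => ‖h w‖^2) z := by
    have h1 : ContDiffAt ℂ 2 h z := (hana z hz).contDiffAt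
    exact (h1.restrict_scalars ℝ).norm_sq ℂ
  have hφ1v : ∀ v : ℂ, DifferentiableAt ℝ (fun w => fderiv ℝ (fun w => ‖h w‖^2) w v) z := fun v =>
    ((hφC.fderiv_right (by norm_num)).differentiableAt one_ne_zero).clm_apply (differentiableAt_const _)
  -- second derivative of φ along v
  have hD2φ : ∀ v : ℂ, fderiv ℝ (fun w => fderiv ℝ (fun w => ‖h w‖^2) w v) z v
      = 2 * ((⟪v • deriv h z, v • deriv h z⟫_ℂ).re
          + (⟪v • (v • deriv (deriv h) z), h z⟫_ℂ).re) := by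
    intro v
    have hev : (fun w => fderiv ℝ (fun w => ‖h w‖^2) w v) =ᶠ[nhds z]
        (fun w => 2 * (⟪v • deriv h w, h w⟫_ℂ).re) :=
      Filter.eventuallyEq_of_mem hmem (fun w hw => hDφ w hw v)
    rw [hev.fderiv_eq]
    have hfd : DifferentiableAt ℝ (fun w => v • deriv h w) z :=
      ((hh'd z hz).restrictScalars ℝ).const_smul v
    have hqd : DifferentiableAt ℝ (fun w => (⟪v • deriv h w, h w⟫_ℂ)) z :=
      hfd.inner ℂ (hhdR z hz)
    have hqre : DifferentiableAt ℝ (fun w => (⟪v • deriv h w, h w⟫_ℂ).re) z :=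
      Complex.reCLM.differentiableAt.comp z hqd
    rw [fderiv_const_mul hqre 2]
    have e2 : fderiv ℝ (fun w => (⟪v • deriv h w, h w⟫_ℂ).re) z
        = Complex.reCLM.comp (fderiv ℝ (fun w => (⟪v • deriv h w, h w⟫_ℂ)) z) :=
      (Complex.reCLM.hasFDerivAt.comp z hqd.hasFDerivAt).fderiv
    have e3 := fderiv_inner_apply (𝕜 := ℂ) hfd (hhdR z hz) v
    have e4 : fderiv ℝ (fun w => v • deriv h w) z v = v • (v • deriv (deriv h) z) := by
      rw [fderiv_fun_const_smul ((hh'd z hz).restrictScalars ℝ) v]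
      simp [hDh' z hz v]
    simp only [ContinuousLinearMap.smul_apply, smul_eq_mul, ContinuousLinearMap.comp_apply,
      Complex.reCLM_apply, e2, e3, e4, hDh z hz v]
    rw [Complex.add_re]
  -- sum of second derivatives of φ
  have hsumφ : fderiv ℝ (fun w => fderiv ℝ (fun w => ‖h w‖^2) w 1) z 1
      + fderiv ℝ (fun w => fderiv ℝ (fun w => ‖h w‖^2) w Complex.I) z Complex.I
      = 4 * ‖deriv h z‖^2 := by
    rw [hD2φ 1, hD2φ Complex.I]
    have hnorm : (⟪deriv h z, deriv h z⟫_ℂ).re = ‖deriv h z‖^2 := (hφψ _).symm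
    have hI2 : Complex.I • (Complex.I • deriv (deriv h) z) = -(deriv (deriv h) z) := by
      rw [smul_smul, Complex.I_mul_I, neg_one_smul]
    have hI1 : (⟪Complex.I • deriv h z, Complex.I • deriv h z⟫_ℂ) = ⟪deriv h z, deriv h z⟫_ℂ := by
      rw [inner_smul_left, inner_smul_right, ← mul_assoc]
      simp [Complex.conj_I]
    rw [hI1, hI2, inner_neg_left]
    simp only [one_smul, Complex.neg_re]
    rw [hnorm]
    ring
  -- first derivative of Φ
  have hMu : ∀ w ∈ U, HasFDerivAt (fun w => M (u w)) ((deriv M (u w)) • fderiv ℝ u w) w :=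
    fun w hw => ((hMd (u w)).hasDerivAt).comp_hasFDerivAt w (hud w hw).hasFDerivAt
  have hDΦ : ∀ w ∈ U, ∀ v : ℂ, fderiv ℝ (fun w => M (u w) * ‖h w‖^2) w v
      = deriv M (u w) * fderiv ℝ u w v * ‖h w‖^2
        + M (u w) * fderiv ℝ (fun w => ‖h w‖^2) w v := by
    intro w hw v
    rw [HasFDerivAt.fderiv (f := fun w => M (u w) * ‖h w‖^2) ((hMu w hw).mul (hφd w hw).hasFDerivAt)]
    simp only [ContinuousLinearMap.add_apply, ContinuousLinearMap.smul_apply, smul_eq_mul]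
    ring
  -- Φ is C² on U
  have hΦC : ContDiffOn ℝ 2 (fun w => M (u w) * ‖h w‖^2) U := by
    have h1 : ContDiffOn ℝ 2 (fun w => M (u w)) U := hM.comp_contDiffOn hu
    have h2 : ContDiffOn ℝ 2 (fun w => ‖h w‖^2) U :=
      ((hana.contDiffOn hU.uniqueDiffOn).restrict_scalars ℝ).norm_sq ℂ
    exact h1.mul h2
  -- second derivative of Φ along v at z
  have hD2Φ : ∀ v : ℂ, fderiv ℝ (fun w => fderiv ℝ (fun w => M (u w) * ‖h w‖^2) w v) z v
      = deriv (deriv M) (u z) * fderiv ℝ u z v * fderiv ℝ u z v * ‖h z‖^2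
        + deriv M (u z) * (fderiv ℝ (fun w => fderiv ℝ u w v) z v) * ‖h z‖^2
        + 2 * (deriv M (u z) * fderiv ℝ u z v * fderiv ℝ (fun w => ‖h w‖^2) z v)
        + M (u z) * fderiv ℝ (fun w => fderiv ℝ (fun w => ‖h w‖^2) w v) z v := by
    intro v
    have hev : (fun w => fderiv ℝ (fun w => M (u w) * ‖h w‖^2) w v) =ᶠ[nhds z]
        (fun w => deriv M (u w) * fderiv ℝ u w v * ‖h w‖^2
          + M (u w) * fderiv ℝ (fun w => ‖h w‖^2) w v) :=
      Filter.eventuallyEq_of_mem hmem (fun w hw => hDΦ w hw v)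
    rw [hev.fderiv_eq]
    have hA : HasFDerivAt (fun w => deriv M (u w)) ((deriv (deriv M) (u z)) • fderiv ℝ u z) z :=
      ((hMd' (u z)).hasDerivAt).comp_hasFDerivAt z (hud z hz).hasFDerivAt
    have hB := (hu1v v).hasFDerivAt
    have hC := (hφd z hz).hasFDerivAt
    have hE := (hφ1v v).hasFDerivAt
    rw [HasFDerivAt.fderiv (f := fun w => deriv M (u w) * fderiv ℝ u w v * ‖h w‖^2
        + M (u w) * fderiv ℝ (fun w => ‖h w‖^2) w v) (((hA.mul hB).mul hC).add ((hMu z hz).mul hE))]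
    simp only [ContinuousLinearMap.add_apply, ContinuousLinearMap.smul_apply, smul_eq_mul, Pi.mul_apply]
    ring
  -- first derivatives of φ at z
  have hF1 : fderiv ℝ (fun w => ‖h w‖^2) z 1 = 2 * (⟪deriv h z, h z⟫_ℂ).re := by
    rw [hDφ z hz 1, one_smul]
  have hF2 : fderiv ℝ (fun w => ‖h w‖^2) z Complex.I = 2 * (⟪deriv h z, h z⟫_ℂ).im := by
    rw [hDφ z hz Complex.I, inner_smul_left]
    simp [Complex.conj_I]
  -- rewrite the goal with the lap formulas
  have e1 : (lap (fun w => ((u w : ℝ) : ℂ)) z).re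
      = (fderiv ℝ (fun w => fderiv ℝ u w 1) z 1
        + fderiv ℝ (fun w => fderiv ℝ u w Complex.I) z Complex.I) / 4 :=
    lap_ofReal_re hU hu hz
  have e2 : (lap (fun w => ((M (u w) * ‖h w‖^2 : ℝ) : ℂ)) z).re
      = (fderiv ℝ (fun w => fderiv ℝ (fun w => M (u w) * ‖h w‖^2) w 1) z 1
        + fderiv ℝ (fun w => fderiv ℝ (fun w => M (u w) * ‖h w‖^2) w Complex.I) z Complex.I) / 4 :=
    lap_ofReal_re hU hΦC hz
  rw [e1, e2, hD2Φ 1, hD2Φ Complex.I, hF1, hF2]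
  -- arithmetic
  have hp : (0:ℝ) ≤ M (u z) := hM0 _ (hu0 z hz)
  have hq : (0:ℝ) ≤ deriv M (u z) := hM1 _ (hu0 z hz)
  have hr : (0:ℝ) ≤ deriv (deriv M) (u z) := hM2 _ (hu0 z hz)
  have hqr : (deriv M (u z))^2 ≤ M (u z) * deriv (deriv M) (u z) := hMdet _ (hu0 z hz)
  set p := M (u z) with hpdef
  set q := deriv M (u z) with hqdef
  set r := deriv (deriv M) (u z) with hrdef
  set a1 := fderiv ℝ u z 1 with ha1
  set a2 := fderiv ℝ u z Complex.I with ha2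
  set L1 := fderiv ℝ (fun w => fderiv ℝ u w 1) z 1 with hL1
  set L2 := fderiv ℝ (fun w => fderiv ℝ u w Complex.I) z Complex.I with hL2
  set G1 := fderiv ℝ (fun w => fderiv ℝ (fun w => ‖h w‖^2) w 1) z 1 with hG1
  set G2 := fderiv ℝ (fun w => fderiv ℝ (fun w => ‖h w‖^2) w Complex.I) z Complex.I with hG2
  set C2 := ‖h z‖^2 with hC2def
  set B2 := ‖deriv h z‖^2 with hB2def
  set cre := (⟪deriv h z, h z⟫_ℂ).re with hcre
  set cim := (⟪deriv h z, h z⟫_ℂ).im with hcim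
  have hCnn : (0:ℝ) ≤ C2 := hC2def ▸ sq_nonneg _
  have hBnn : (0:ℝ) ≤ B2 := hB2def ▸ sq_nonneg _
  have hcs0 : ‖(⟪deriv h z, h z⟫_ℂ)‖^2 = cre^2 + cim^2 := by
    rw [Complex.sq_norm, Complex.normSq_apply, hcre, hcim]; ring
  have hcs : cre^2 + cim^2 ≤ B2 * C2 := by
    have h1 := norm_inner_le_norm (𝕜 := ℂ) (deriv h z) (h z)
    rw [hB2def, hC2def, ← hcs0]
    nlinarith [norm_nonneg (⟪deriv h z, h z⟫_ℂ), norm_nonneg (deriv h z), norm_nonneg (h z)]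
  clear_value p q r a1 a2 L1 L2 G1 G2 C2 B2 cre cim
  clear e1 e2 hD2Φ hD2φ hDφ hDΦ hMu hφ1v hφC hφd hψd hfun hφψ hDh hDh' hhd hh'd hhdR hkey
  clear hana hana' hu1v hu1 hud hMd hMd' hM2' husub hu0 hu hh hM hMdet hM0 hM1 hM2 hcs0 hmem
  have s1 : (a1*cre + a2*cim)^2 ≤ (a1^2+a2^2) * (cre^2+cim^2) := by
    nlinarith [sq_nonneg (a1*cim - a2*cre)]
  have s2 : (a1^2+a2^2) * (cre^2+cim^2) ≤ (a1^2+a2^2) * (B2 * C2) :=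
    mul_le_mul_of_nonneg_left hcs (by positivity)
  have s3 : q^2 * ((a1*cre+a2*cim)^2) ≤ (p*r) * ((a1^2+a2^2) * (B2*C2)) :=
    mul_le_mul hqr (s1.trans s2) (sq_nonneg _) (mul_nonneg hp hr)
  have key2 : (0:ℝ) ≤ r*(a1^2+a2^2)*C2 + 4*(p*B2) :=
    add_nonneg (mul_nonneg (mul_nonneg hr (by positivity)) hCnn)
      (mul_nonneg (by norm_num) (mul_nonneg hp hBnn))
  have key1 : (4*(q*(a1*cre+a2*cim)))^2 ≤ (r*(a1^2+a2^2)*C2 + 4*(p*B2))^2 := by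
    nlinarith [s3, sq_nonneg (r*(a1^2+a2^2)*C2 - 4*(p*B2)), mul_nonneg hBnn hCnn]
  have main : (0:ℝ) ≤ r*(a1^2+a2^2)*C2 + 4*(q*(a1*cre+a2*cim)) + 4*(p*B2) := by
    nlinarith [key1, key2]
  have hpG : p*G1 + p*G2 = 4*(p*B2) := by
    have := hsumφ
    linear_combination p * this
  linarith [main, hpG]
end
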